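/- Let G be a finite connected simple graph with at least two vertices and let x ≠ y be vertices of G. Let η denote the number of common neighbours of x and y. Then the Wasserstein distance between the neighbour measures satisfies W1(μ_x, μ_y) ≤ (d(x,y) + 2)·(1 − η/max(deg(x), deg(y))), where d(x,y) is the shortest-path distance between x and y. -/

import Mathlib

/-!
STATEMENT 19: Let G be a finite connected simple graph with at least two
vertices and let x ≠ y be vertices of G. Let η denote the number of common
neighbours of x and y. Then the Wasserstein distance between the neighbour
measures satisfies W1(μ_x, μ_y) ≤ (d(x,y) + 2)·(1 − η/max(deg(x), deg(y))),
where d(x,y) is the shortest-path distance between x and y.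
-/
open Finset

variable {V : Type*}

/-- A coupling of two measures `μ` and `ν` on a finite vertex set. -/
def IsCoupling [Fintype V] (μ ν : V → ℝ) (ξ : V → V → ℝ) : Prop :=
  (∀ u v, 0 ≤ ξ u v) ∧ (∀ u, ∑ v, ξ u v = μ u) ∧ (∀ v, ∑ u, ξ u v = ν v)

/-- The 1-Wasserstein distance between `μ` and `ν` with respect to the distance
function `d`: the infimum over couplings of the transport cost. -/
noncomputable def W1 [Fintype V] (d : V → V → ℝ) (μ ν : V → ℝ) : ℝ :=
  sInf {c | ∃ ξ : V → V → ℝ, IsCoupling μ ν ξ ∧ c = ∑ u, ∑ v, d u v * ξ u v}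

/-- The neighbour measure of a vertex `x`: mass `1/deg(x)` on each neighbour. -/
noncomputable def nbrMeasure [Fintype V] (G : SimpleGraph V) [DecidableRel G.Adj]
    (x : V) : V → ℝ :=
  fun z => if G.Adj x z then 1 / (G.degree x : ℝ) else 0

/-- The Ollivier–Ricci curvature of a pair of vertices, computed with the
shortest-path distance of `G`. -/
noncomputable def orc [Fintype V] (G : SimpleGraph V) [DecidableRel G.Adj]
    (x y : V) : ℝ :=
  1 - W1 (fun u v => (G.dist u v : ℝ)) (nbrMeasure G x) (nbrMeasure G y) / (G.dist x y)

/-- The number of common neighbours of two vertices. -/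
def commonNbrs [Fintype V] [DecidableEq V] (G : SimpleGraph V)
    [DecidableRel G.Adj] (x y : V) : ℕ :=
  (G.neighborFinset x ∩ G.neighborFinset y).card

theorem stmt19 [Fintype V] [DecidableEq V] (G : SimpleGraph V)
    [DecidableRel G.Adj] (hconn : G.Connected) (hcard : 2 ≤ Fintype.card V)
    (x y : V) (hxy : x ≠ y) :
    W1 (fun u v => (G.dist u v : ℝ)) (nbrMeasure G x) (nbrMeasure G y) ≤
      ((G.dist x y : ℝ) + 2) *
        (1 - (commonNbrs G x y : ℝ) / (max (G.degree x) (G.degree y) : ℝ)) := by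
  -- degrees positive
  have hdeg : ∀ z : V, 0 < G.degree z := by
    intro z
    rw [G.degree_pos_iff_exists_adj z]
    obtain ⟨w, hw⟩ := Fintype.exists_ne_of_one_lt_card (by omega) z
    obtain ⟨p⟩ := hconn z w
    exact ⟨_, p.adj_snd (SimpleGraph.Walk.not_nil_of_ne (Ne.symm hw))⟩
  set dx := G.degree x with hdx
  set dy := G.degree y with hdy
  set m := max dx dy with hmdef
  have hm : (0:ℝ) < m := by
    have := hdeg x
    simp only [hmdef]
    positivity
  have hdxR : (0:ℝ) < dx := by exact_mod_cast hdeg x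
  have hdyR : (0:ℝ) < dy := by exact_mod_cast hdeg y
  set C := G.neighborFinset x ∩ G.neighborFinset y with hC
  set η := commonNbrs G x y with hη
  have hηC : η = C.card := rfl
  set μ : V → ℝ := nbrMeasure G x with hμ
  set ν : V → ℝ := nbrMeasure G y with hν
  set μ' : V → ℝ := fun u => μ u - (if u ∈ C then 1/(m:ℝ) else 0) with hμ'
  set ν' : V → ℝ := fun v => ν v - (if v ∈ C then 1/(m:ℝ) else 0) with hν'
  set t : ℝ := 1 - (η:ℝ)/(m:ℝ) with ht
  -- nonnegativity of residuals
  have hμnn : ∀ u, 0 ≤ μ u := by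
    intro u; simp only [hμ, nbrMeasure]; split <;> positivity
  have hνnn : ∀ v, 0 ≤ ν v := by
    intro v; simp only [hν, nbrMeasure]; split <;> positivity
  have hμ'nn : ∀ u, 0 ≤ μ' u := by
    intro u
    simp only [hμ']
    split
    · rename_i h
      have hadj : G.Adj x u := by
        simp only [hC, mem_inter, SimpleGraph.mem_neighborFinset] at h
        exact h.1
      have : μ u = 1/(dx:ℝ) := by simp [hμ, nbrMeasure, hadj, hdx]
      rw [this]
      have hle : (dx:ℝ) ≤ m := by exact_mod_cast le_max_left dx dy
      have := one_div_le_one_div_of_le hdxR hle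
      linarith
    · simpa using hμnn u
  have hν'nn : ∀ v, 0 ≤ ν' v := by
    intro v
    simp only [hν']
    split
    · rename_i h
      have hadj : G.Adj y v := by
        simp only [hC, mem_inter, SimpleGraph.mem_neighborFinset] at h
        exact h.2
      have : ν v = 1/(dy:ℝ) := by simp [hν, nbrMeasure, hadj, hdy]
      rw [this]
      have hle : (dy:ℝ) ≤ m := by exact_mod_cast le_max_right dx dy
      have := one_div_le_one_div_of_le hdyR hle
      linarith
    · simpa using hνnn v
  -- sums
  have hμsum : ∑ u, μ u = 1 := by
    simp only [hμ, nbrMeasure]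
    rw [← Finset.sum_filter]
    have : Finset.filter (fun z => G.Adj x z) Finset.univ = G.neighborFinset x := by
      ext z; simp [SimpleGraph.mem_neighborFinset]
    rw [this, Finset.sum_const, SimpleGraph.card_neighborFinset_eq_degree]
    field_simp
    rw [nsmul_eq_mul, mul_one_div_cancel (by exact_mod_cast (hdeg x).ne')]
  have hνsum : ∑ v, ν v = 1 := by
    simp only [hν, nbrMeasure]
    rw [← Finset.sum_filter]
    have : Finset.filter (fun z => G.Adj y z) Finset.univ = G.neighborFinset y := by
      ext z; simp [SimpleGraph.mem_neighborFinset]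
    rw [this, Finset.sum_const, SimpleGraph.card_neighborFinset_eq_degree]
    field_simp
    rw [nsmul_eq_mul, mul_one_div_cancel (by exact_mod_cast (hdeg y).ne')]
  have hCsum : ∑ u, (if u ∈ C then 1/(m:ℝ) else 0) = (η:ℝ)/(m:ℝ) := by
    rw [Finset.sum_ite_mem, Finset.univ_inter, Finset.sum_const, hηC]
    simp [div_eq_mul_inv, one_div]
  have hμ'sum : ∑ u, μ' u = t := by
    simp only [hμ', Finset.sum_sub_distrib, hμsum, hCsum, ht]
  have hν'sum : ∑ v, ν' v = t := by
    simp only [hν', Finset.sum_sub_distrib, hνsum, hCsum, ht]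
  have htnn : 0 ≤ t := by rw [← hμ'sum]; exact Finset.sum_nonneg fun u _ => hμ'nn u
  -- if t = 0 residuals vanish
  have hμ'zero : t = 0 → ∀ u, μ' u = 0 := by
    intro h0 u
    have := (Finset.sum_eq_zero_iff_of_nonneg (fun u _ => hμ'nn u)).mp (hμ'sum.trans h0)
    exact this u (Finset.mem_univ u)
  -- the coupling
  set ξ : V → V → ℝ := fun u v =>
    (if u = v ∧ u ∈ C then 1/(m:ℝ) else 0) + μ' u * ν' v / t with hξ
  have hξnn : ∀ u v, 0 ≤ ξ u v := by
    intro u v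
    simp only [hξ]
    have h1 : (0:ℝ) ≤ (if u = v ∧ u ∈ C then 1/(m:ℝ) else 0) := by positivity
    have h2 : (0:ℝ) ≤ μ' u * ν' v / t := by
      have := hμ'nn u; have := hν'nn v; positivity
    linarith
  have hratio : ∀ u, μ' u * t / t = μ' u := by
    intro u
    rcases eq_or_ne t 0 with h0 | h0
    · simp [h0, hμ'zero h0 u]
    · field_simp
  have hratio' : ∀ v, t * ν' v / t = ν' v := by
    intro v
    rcases eq_or_ne t 0 with h0 | h0
    · have hz : ν' v = 0 := by
        have := (Finset.sum_eq_zero_iff_of_nonneg (fun v _ => hν'nn v)).mp (hν'sum.trans h0)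
        exact this v (Finset.mem_univ v)
      simp [h0, hz]
    · field_simp
  have hmarg1 : ∀ u, ∑ v, ξ u v = μ u := by
    intro u
    simp only [hξ]
    rw [Finset.sum_add_distrib]
    have e1 : ∑ v, (if u = v ∧ u ∈ C then 1/(m:ℝ) else 0) =
        (if u ∈ C then 1/(m:ℝ) else 0) := by
      rw [Finset.sum_eq_single u]
      · simp
      · intro b _ hb
        simp [(Ne.symm hb : u ≠ b)]
      · intro h; exact absurd (Finset.mem_univ u) h
    have e2 : ∑ v, μ' u * ν' v / t = μ' u := by
      rw [← Finset.sum_div, ← Finset.mul_sum, hν'sum, hratio u]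
    rw [e1, e2]
    simp [hμ']
  have hmarg2 : ∀ v, ∑ u, ξ u v = ν v := by
    intro v
    simp only [hξ]
    rw [Finset.sum_add_distrib]
    have e1 : ∑ u, (if u = v ∧ u ∈ C then 1/(m:ℝ) else 0) =
        (if v ∈ C then 1/(m:ℝ) else 0) := by
      rw [Finset.sum_eq_single v]
      · simp
      · intro b _ hb
        simp [hb]
      · intro h; exact absurd (Finset.mem_univ v) h
    have e2 : ∑ u, μ' u * ν' v / t = ν' v := by
      rw [← Finset.sum_div, ← Finset.sum_mul, hμ'sum, hratio' v]
    rw [e1, e2]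
    simp [hν']
  -- distance bound for support of residual product
  have hD : ∀ u v, μ' u ≠ 0 → ν' v ≠ 0 → (G.dist u v : ℝ) ≤ (G.dist x y : ℝ) + 2 := by
    intro u v hu hv
    have hux : G.Adj x u := by
      by_contra h
      apply hu
      simp [hμ', hμ, nbrMeasure, h, hC, SimpleGraph.mem_neighborFinset]
    have hvy : G.Adj y v := by
      by_contra h
      apply hv
      simp [hν', hν, nbrMeasure, h, hC, SimpleGraph.mem_neighborFinset]
    have h1 : G.dist u x = 1 := SimpleGraph.dist_eq_one_iff_adj.mpr hux.symm
    have h2 : G.dist y v = 1 := SimpleGraph.dist_eq_one_iff_adj.mpr hvy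
    have t1 : G.dist u v ≤ G.dist u x + G.dist x v := hconn.dist_triangle
    have t2 : G.dist x v ≤ G.dist x y + G.dist y v := hconn.dist_triangle
    have : G.dist u v ≤ G.dist x y + 2 := by omega
    push_cast
    exact_mod_cast by exact_mod_cast Nat.cast_le.mpr this
  -- cost bound
  set cost : ℝ := ∑ u, ∑ v, (G.dist u v : ℝ) * ξ u v with hcost
  have hcostle : cost ≤ ((G.dist x y : ℝ) + 2) * t := by
    have step : ∀ u v, (G.dist u v : ℝ) * ξ u v ≤
        ((G.dist x y : ℝ) + 2) * (μ' u * ν' v / t) := by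
      intro u v
      have hdiag : (G.dist u v : ℝ) * (if u = v ∧ u ∈ C then 1/(m:ℝ) else 0) = 0 := by
        by_cases h : u = v ∧ u ∈ C
        · simp [h.1]
        · simp [h]
      simp only [hξ, mul_add, hdiag, zero_add]
      by_cases h : μ' u ≠ 0 ∧ ν' v ≠ 0
      · have hp : 0 ≤ μ' u * ν' v / t := by
          have := hμ'nn u; have := hν'nn v; positivity
        exact mul_le_mul_of_nonneg_right (hD u v h.1 h.2) hp
      · push_neg at h
        rcases eq_or_ne (μ' u) 0 with h0 | h0
        · simp [h0]
        · rw [h h0]; simp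
    have inner : ∀ u, ∑ v, ((G.dist x y : ℝ) + 2) * (μ' u * ν' v / t) =
        ((G.dist x y : ℝ) + 2) * μ' u := by
      intro u
      rw [← Finset.mul_sum, ← Finset.sum_div, ← Finset.mul_sum, hν'sum, hratio u]
    calc cost ≤ ∑ u, ∑ v, ((G.dist x y : ℝ) + 2) * (μ' u * ν' v / t) := by
          apply Finset.sum_le_sum; intro u _
          apply Finset.sum_le_sum; intro v _
          exact step u v
      _ = ((G.dist x y : ℝ) + 2) * t := by
          simp only [inner]
          rw [← Finset.mul_sum, hμ'sum]
  -- conclude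
  have hRHS : ((G.dist x y : ℝ) + 2) *
      (1 - (commonNbrs G x y : ℝ) / (max (G.degree x) (G.degree y) : ℝ)) =
      ((G.dist x y : ℝ) + 2) * t := by
    rw [ht, hη, hmdef, hdx, hdy]
    push_cast
    ring
  rw [hRHS]
  have hmem : cost ∈ {c | ∃ ξ : V → V → ℝ, IsCoupling μ ν ξ ∧
      c = ∑ u, ∑ v, (G.dist u v : ℝ) * ξ u v} :=
    ⟨ξ, ⟨hξnn, hmarg1, hmarg2⟩, rfl⟩
  have hbdd : BddBelow {c | ∃ ξ : V → V → ℝ, IsCoupling μ ν ξ ∧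
      c = ∑ u, ∑ v, (G.dist u v : ℝ) * ξ u v} := by
    refine ⟨0, ?_⟩
    rintro c ⟨ζ, ⟨hnn, -, -⟩, rfl⟩
    apply Finset.sum_nonneg; intro u _
    apply Finset.sum_nonneg; intro v _
    have := hnn u v
    positivity
  calc W1 (fun u v => (G.dist u v : ℝ)) μ ν ≤ cost := csInf_le hbdd hmem
    _ ≤ ((G.dist x y : ℝ) + 2) * t := hcostle
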